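/- For every positive integer n and every Boolean function g : {0,1}^n → {0,1}, the energy complexity of the extended address function satisfies EC(EADDR_{n,g}) ≤ 6n + 2. -/

import Mathlib

/-- A gate in a Boolean circuit over the standard basis `{∨₂, ∧₂, ¬}`:
input gates labelled by variables, constant gates, and `∧`/`∨`/`¬` gates
whose arguments are (indices of) earlier gates. -/
inductive Gate (n : ℕ) : Type where
  | input : Fin n → Gate n
  | const : Bool → Gate n
  | and : ℕ → ℕ → Gate n
  | or : ℕ → ℕ → Gate n
  | not : ℕ → Gate n
deriving DecidableEq

/-- The indices of the incoming gates of a gate. -/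
def Gate.deps {n : ℕ} : Gate n → List ℕ
  | .and a b => [a, b]
  | .or a b => [a, b]
  | .not a => [a]
  | _ => []

/-- Inner gates are the non-input (and non-constant) gates, i.e. `∧`, `∨`, `¬` gates. -/
def Gate.isInner {n : ℕ} : Gate n → Bool
  | .and _ _ => true
  | .or _ _ => true
  | .not _ => true
  | _ => false

/-- A Boolean circuit over the standard basis on `n` input variables: a sequence of
gates (topologically sorted, so each gate only takes earlier gates as inputs,
which makes the underlying graph acyclic) together with a designated output gate. -/
structure Circuit (n : ℕ) : Type where
  size : ℕ
  gates : Fin size → Gate n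
  out : Fin size
  wf : ∀ i : Fin size, ∀ j ∈ (gates i).deps, j < (i : ℕ)

/-- The Boolean value of gate `i` of circuit `C` under input `x`. -/
def Circuit.evalGate {n : ℕ} (C : Circuit n) (x : Fin n → Bool) (i : ℕ) (h : i < C.size) :
    Bool :=
  match hg : C.gates ⟨i, h⟩ with
  | .input j => x j
  | .const b => b
  | .not a =>
      have ha : a < i := C.wf ⟨i, h⟩ a (by rw [hg]; simp [Gate.deps])
      ! C.evalGate x a (ha.trans h)
  | .and a b =>
      have ha : a < i := C.wf ⟨i, h⟩ a (by rw [hg]; simp [Gate.deps])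
      have hb : b < i := C.wf ⟨i, h⟩ b (by rw [hg]; simp [Gate.deps])
      C.evalGate x a (ha.trans h) && C.evalGate x b (hb.trans h)
  | .or a b =>
      have ha : a < i := C.wf ⟨i, h⟩ a (by rw [hg]; simp [Gate.deps])
      have hb : b < i := C.wf ⟨i, h⟩ b (by rw [hg]; simp [Gate.deps])
      C.evalGate x a (ha.trans h) || C.evalGate x b (hb.trans h)
termination_by i

/-- The output of circuit `C` on input `x`. -/
def Circuit.output {n : ℕ} (C : Circuit n) (x : Fin n → Bool) : Bool :=
  C.evalGate x C.out C.out.isLt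

/-- `C` computes the Boolean function `f`. -/
def Circuit.Computes {n : ℕ} (C : Circuit n) (f : (Fin n → Bool) → Bool) : Prop :=
  ∀ x, C.output x = f x

/-- The number of activated inner gates of `C` under input `x`. -/
def Circuit.energyAt {n : ℕ} (C : Circuit n) (x : Fin n → Bool) : ℕ :=
  (Finset.univ.filter fun i : Fin C.size =>
    (C.gates i).isInner = true ∧ C.evalGate x i i.isLt = true).card

/-- The energy complexity `EC(C)` of a circuit `C`: the maximum number of
activated inner gates over all inputs. -/
def Circuit.energy {n : ℕ} (C : Circuit n) : ℕ :=
  Finset.univ.sup fun x : Fin n → Bool => C.energyAt x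

/-- The energy complexity `EC(f)` of a Boolean function `f`: the minimum of `EC(C)`
over all circuits `C` computing `f`. -/
noncomputable def EC {n : ℕ} (f : (Fin n → Bool) → Bool) : ℕ :=
  sInf {k | ∃ C : Circuit n, C.Computes f ∧ C.energy = k}

/-- The number with binary representation `x 0, x 1, …, x (n-1)` (most significant
bit first); it is less than `2^n` (so taking `% 2^n` below does not change it). -/
def binVal {n : ℕ} (x : Fin n → Bool) : ℕ :=
  ∑ i : Fin n, if x i = true then 2 ^ (n - 1 - (i : ℕ)) else 0

/-- The extended address function `EADDR_{n,g} : {0,1}^{n+2^n} → {0,1}`: it returns the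
`y`-bit indexed by the number with binary representation `x_1 x_2 ⋯ x_n` if
`g(x) = 1`, and the negation of that bit if `g(x) = 0`. -/
def EADDR (n : ℕ) (g : (Fin n → Bool) → Bool) : (Fin (n + 2 ^ n) → Bool) → Bool := fun z =>
  let x : Fin n → Bool := fun i : Fin n => z (Fin.castAdd (2 ^ n) i)
  let y : Bool := z (Fin.natAdd n ⟨binVal x % 2 ^ n, Nat.mod_lt _ (by positivity)⟩)
  if g x then y else !y
lemma Circuit.evalGate_input {n : ℕ} (C : Circuit n) (x : Fin n → Bool) {i : ℕ} {h : i < C.size}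
    {j : Fin n} (hg : C.gates ⟨i, h⟩ = .input j) : C.evalGate x i h = x j := by
  rw [Circuit.evalGate.eq_def]; split <;> simp_all

lemma Circuit.evalGate_const {n : ℕ} (C : Circuit n) (x : Fin n → Bool) {i : ℕ} {h : i < C.size}
    {b : Bool} (hg : C.gates ⟨i, h⟩ = .const b) : C.evalGate x i h = b := by
  rw [Circuit.evalGate.eq_def]; split <;> simp_all

lemma Circuit.evalGate_not {n : ℕ} (C : Circuit n) (x : Fin n → Bool) {i : ℕ} {h : i < C.size}
    {a : ℕ} (hg : C.gates ⟨i, h⟩ = .not a) (ha : a < i) :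
    C.evalGate x i h = ! C.evalGate x a (ha.trans h) := by
  rw [Circuit.evalGate.eq_def]; split <;> simp_all

lemma Circuit.evalGate_and {n : ℕ} (C : Circuit n) (x : Fin n → Bool) {i : ℕ} {h : i < C.size}
    {a b : ℕ} (hg : C.gates ⟨i, h⟩ = .and a b) (ha : a < i) (hb : b < i) :
    C.evalGate x i h = (C.evalGate x a (ha.trans h) && C.evalGate x b (hb.trans h)) := by
  rw [Circuit.evalGate.eq_def]; split <;> simp_all

lemma Circuit.evalGate_or {n : ℕ} (C : Circuit n) (x : Fin n → Bool) {i : ℕ} {h : i < C.size}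
    {a b : ℕ} (hg : C.gates ⟨i, h⟩ = .or a b) (ha : a < i) (hb : b < i) :
    C.evalGate x i h = (C.evalGate x a (ha.trans h) || C.evalGate x b (hb.trans h)) := by
  rw [Circuit.evalGate.eq_def]; split <;> simp_all
namespace S10

/-- value of the length-`ℓ` prefix of the bit string `x` (MSB first) -/
def prefVal : ℕ → (ℕ → Bool) → ℕ
  | 0, _ => 0
  | ℓ+1, x => 2 * prefVal ℓ x + (if x ℓ then 1 else 0)

lemma prefVal_lt (x : ℕ → Bool) : ∀ ℓ, prefVal ℓ x < 2^ℓ := by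
  intro ℓ; induction ℓ with
  | zero => simp [prefVal]
  | succ ℓ ih => rw [prefVal, pow_succ]; split <;> omega

lemma prefVal_testBit (x : ℕ → Bool) : ∀ ℓ, ∀ j, (prefVal ℓ x).testBit j =
    if j < ℓ then x (ℓ - 1 - j) else false := by
  intro ℓ; induction ℓ with
  | zero => intro j; simp [prefVal]
  | succ ℓ ih =>
    intro j
    cases j with
    | zero =>
      rw [prefVal, Nat.testBit_zero]
      rcases hx : x ℓ <;> simp [hx, Nat.mul_add_mod]
    | succ j =>
      rw [prefVal, Nat.testBit_add_one]
      have h2 : (2 * prefVal ℓ x + (if x ℓ then 1 else 0)) / 2 = prefVal ℓ x := by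
        split <;> omega
      rw [h2, ih j]
      rcases Nat.lt_or_ge j ℓ with h | h
      · rw [if_pos h, if_pos (by omega)]
        congr 1; omega
      · rw [if_neg (by omega), if_neg (by omega)]

lemma prefVal_sum (x : ℕ → Bool) : ∀ ℓ, prefVal ℓ x =
    ∑ i ∈ Finset.range ℓ, if x i then 2^(ℓ - 1 - i) else 0 := by
  intro ℓ; induction ℓ with
  | zero => simp [prefVal]
  | succ ℓ ih =>
    rw [prefVal, ih, Finset.sum_range_succ, Finset.mul_sum]
    have : ∀ i ∈ Finset.range ℓ,
        (2 * if x i then 2^(ℓ - 1 - i) else 0) = if x i then 2^(ℓ - i) else 0 := by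
      intro i hi; rw [Finset.mem_range] at hi
      split
      · rw [← pow_succ']
        congr 1; omega
      · ring
    rw [Finset.sum_congr rfl this]
    simp only [Nat.succ_sub_one]
    split <;> simp [Nat.sub_self]

/-- binary decomposition of positive naturals -/
lemma exists_depth : ∀ t : ℕ, 1 ≤ t → ∃ d u, u < 2^d ∧ t = 2^d + u := by
  intro t
  induction t using Nat.strong_induction_on with
  | _ t ih =>
    intro ht
    rcases Nat.lt_or_ge t 2 with h2 | h2
    · exact ⟨0, 0, by omega, by omega⟩
    · obtain ⟨d, u, hu, he⟩ := ih (t / 2) (by omega) (by omega)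
      refine ⟨d + 1, 2 * u + t % 2, ?_, ?_⟩ <;> rw [pow_succ] <;> omega

end S10
namespace S10

variable (n : ℕ) (g : (Fin n → Bool) → Bool)

def S : ℕ := 2 * 2^n - 1
def baseY : ℕ := 2*n + 2
def baseC : ℕ := 2*n + 2 + 2^n
def baseT : ℕ := baseC n + n * 2^n
def csize : ℕ := baseT n + 2 * S n + 2

/-- `g` as a function on numerical addresses -/
def gN (a : ℕ) : Bool := g (fun i => a.testBit (n - 1 - (i : ℕ)))

/-- the `p`-th gate of the circuit for `EADDR n g` -/
def gateAt (p : ℕ) : Gate (n + 2^n) :=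
  if h : p < n then .input (Fin.castAdd (2^n) ⟨p, h⟩)
  else if p < 2*n then .not (p - n)
  else if p = 2*n then .const false
  else if p = 2*n + 1 then .const true
  else if p < baseC n then
    .input (Fin.natAdd n ⟨(p - baseY n) % 2^n, Nat.mod_lt _ (Nat.two_pow_pos n)⟩)
  else if p < baseT n then
    .and (if (p - baseC n) / 2^n = 0 then (if (p - baseC n) % 2^n < 2 then 2*n+1 else 2*n)
          else baseC n + (((p - baseC n) / 2^n - 1) * 2^n + ((p - baseC n) % 2^n) / 2))
         (if (p - baseC n) % 2^n % 2 = 1 then (p - baseC n) / 2^n else n + (p - baseC n) / 2^n)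
  else if p < baseT n + 2 * S n then
    if 2^n ≤ S n - (p - baseT n) % S n then
      .and (baseC n + ((n-1) * 2^n + (S n - (p - baseT n) % S n - 2^n)))
           (if (p - baseT n) / S n = 0 then
              (if gN n g (S n - (p - baseT n) % S n - 2^n) then 2*n+1
               else baseY n + (S n - (p - baseT n) % S n - 2^n))
            else
              (if gN n g (S n - (p - baseT n) % S n - 2^n)
               then baseY n + (S n - (p - baseT n) % S n - 2^n)
               else 2*n))
    else .or (baseT n + ((p - baseT n) / S n) * S n + (S n - 2 * (S n - (p - baseT n) % S n)))
             (baseT n + ((p - baseT n) / S n) * S n + (S n - (2 * (S n - (p - baseT n) % S n) + 1)))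
  else if p = baseT n + 2 * S n then .not (baseT n + S n - 1)
  else .or (baseT n + 2 * S n - 1) (baseT n + 2 * S n)

lemma hP : 0 < 2^n := Nat.two_pow_pos n

lemma gateAt_A {i : ℕ} (h : i < n) :
    gateAt n g i = .input (Fin.castAdd (2^n) ⟨i, h⟩) := by
  unfold gateAt; rw [dif_pos h]

lemma gateAt_B {i : ℕ} (h : i < n) : gateAt n g (n + i) = .not i := by
  unfold gateAt
  rw [dif_neg (by omega), if_pos (by omega)]
  congr 1; omega

lemma gateAt_cf : gateAt n g (2*n) = .const false := by
  unfold gateAt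
  rw [dif_neg (by omega), if_neg (by omega), if_pos rfl]

lemma gateAt_ct : gateAt n g (2*n+1) = .const true := by
  unfold gateAt
  rw [dif_neg (by omega), if_neg (by omega), if_neg (by omega), if_pos rfl]

lemma gateAt_Y {a : ℕ} (ha : a < 2^n) :
    gateAt n g (baseY n + a) = .input (Fin.natAdd n ⟨a, ha⟩) := by
  have hP := hP n
  unfold gateAt baseY baseC
  rw [dif_neg (by omega), if_neg (by omega), if_neg (by omega), if_neg (by omega),
    if_pos (by omega)]
  congr 1
  simp [Fin.ext_iff, Nat.mod_eq_of_lt ha]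

lemma mulbridge {l : ℕ} (hl : l < n) : l * 2^n + 2^n ≤ n * 2^n := by
  have h1 : l + 1 ≤ n := hl
  have h2 := Nat.mul_le_mul_right (2^n) h1
  rw [Nat.add_mul, Nat.one_mul] at h2
  exact h2

lemma gateAt_C {l v : ℕ} (hl : l < n) (hv : v < 2^n) :
    gateAt n g (baseC n + (l * 2^n + v)) =
      .and (if l = 0 then (if v < 2 then 2*n+1 else 2*n)
            else baseC n + ((l-1) * 2^n + v / 2))
           (if v % 2 = 1 then l else n + l) := by
  have hP := hP n
  have hb := mulbridge n hl
  have hm : baseC n + (l * 2^n + v) - baseC n = l * 2^n + v := by omega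
  have hdiv : (l * 2^n + v) / 2^n = l := by
    rw [Nat.add_comm, Nat.add_mul_div_right _ _ hP, Nat.div_eq_of_lt hv]; omega
  have hmod : (l * 2^n + v) % 2^n = v := by
    rw [Nat.add_comm, Nat.add_mul_mod_self_right, Nat.mod_eq_of_lt hv]
  unfold gateAt
  rw [dif_neg (by unfold baseC; omega), if_neg (by unfold baseC; omega),
    if_neg (by unfold baseC; omega), if_neg (by unfold baseC; omega),
    if_neg (by unfold baseC; omega), if_pos (by unfold baseT; omega), hm, hdiv, hmod]

lemma gateAt_tree {k t : ℕ} (hk : k < 2) (ht1 : 1 ≤ t) (ht2 : t ≤ S n) :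
    gateAt n g (baseT n + k * S n + (S n - t)) =
      if 2^n ≤ t then
        .and (baseC n + ((n-1) * 2^n + (t - 2^n)))
             (if k = 0 then (if gN n g (t - 2^n) then 2*n+1 else baseY n + (t - 2^n))
              else (if gN n g (t - 2^n) then baseY n + (t - 2^n) else 2*n))
      else .or (baseT n + k * S n + (S n - 2*t)) (baseT n + k * S n + (S n - (2*t+1))) := by
  have hP := hP n
  have hS : S n = 2 * 2^n - 1 := rfl
  have hkS : k * S n ≤ 1 * S n := Nat.mul_le_mul_right _ (by omega)
  rw [Nat.one_mul] at hkS
  have hm : baseT n + k * S n + (S n - t) - baseT n = (S n - t) + k * S n := by omega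
  have hdiv : ((S n - t) + k * S n) / S n = k := by
    rw [Nat.add_mul_div_right _ _ (by omega), Nat.div_eq_of_lt (by omega)]; omega
  have hmod : ((S n - t) + k * S n) % S n = S n - t := by
    rw [Nat.add_mul_mod_self_right, Nat.mod_eq_of_lt (by omega)]
  have hst : S n - (S n - t) = t := by omega
  unfold gateAt
  rw [dif_neg (by unfold baseT baseC; omega), if_neg (by unfold baseT baseC; omega),
    if_neg (by unfold baseT baseC; omega), if_neg (by unfold baseT baseC; omega),
    if_neg (by unfold baseT baseC; omega), if_neg (by omega), if_pos (by omega),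
    hm, hdiv, hmod, hst]

lemma gateAt_top0 : gateAt n g (baseT n + 2 * S n) = .not (baseT n + S n - 1) := by
  have hP := hP n
  have hS : S n = 2 * 2^n - 1 := rfl
  unfold gateAt
  rw [dif_neg (by unfold baseT baseC; omega), if_neg (by unfold baseT baseC; omega),
    if_neg (by unfold baseT baseC; omega), if_neg (by unfold baseT baseC; omega),
    if_neg (by unfold baseT baseC; omega), if_neg (by omega), if_neg (by omega), if_pos rfl]

lemma gateAt_top1 : gateAt n g (baseT n + 2 * S n + 1) =
    .or (baseT n + 2 * S n - 1) (baseT n + 2 * S n) := by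
  have hP := hP n
  have hS : S n = 2 * 2^n - 1 := rfl
  unfold gateAt
  rw [dif_neg (by unfold baseT baseC; omega), if_neg (by unfold baseT baseC; omega),
    if_neg (by unfold baseT baseC; omega), if_neg (by unfold baseT baseC; omega),
    if_neg (by unfold baseT baseC; omega), if_neg (by omega), if_neg (by omega),
    if_neg (by omega)]

/-- every position below `csize` falls in one of the blocks -/
lemma coverage {p : ℕ} (hp : p < csize n) :
    p < n ∨ (∃ i < n, p = n + i) ∨ p = 2*n ∨ p = 2*n+1 ∨
    (∃ a < 2^n, p = baseY n + a) ∨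
    (∃ l < n, ∃ v < 2^n, p = baseC n + (l * 2^n + v)) ∨
    (∃ k < 2, ∃ t, 1 ≤ t ∧ t ≤ S n ∧ p = baseT n + k * S n + (S n - t)) ∨
    p = baseT n + 2 * S n ∨ p = baseT n + 2 * S n + 1 := by
  have hP := hP n
  have hS : S n = 2 * 2^n - 1 := rfl
  rcases Nat.lt_or_ge p n with h | h
  · exact Or.inl h
  rcases Nat.lt_or_ge p (2*n) with h2 | h2
  · exact Or.inr (Or.inl ⟨p - n, by omega, by omega⟩)
  rcases Nat.lt_or_ge p (baseY n) with h3 | h3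
  · unfold baseY at h3; omega
  rcases Nat.lt_or_ge p (baseC n) with h4 | h4
  · refine Or.inr (Or.inr (Or.inr (Or.inr (Or.inl ⟨p - baseY n, ?_, by omega⟩))))
    unfold baseY baseC at *; omega
  rcases Nat.lt_or_ge p (baseT n) with h5 | h5
  · refine Or.inr (Or.inr (Or.inr (Or.inr (Or.inr (Or.inl
      ⟨(p - baseC n) / 2^n, ?_, (p - baseC n) % 2^n, Nat.mod_lt _ hP, ?_⟩)))))
    · exact Nat.div_lt_of_lt_mul (by rw [Nat.mul_comm]; unfold baseT at h5; omega)
    · have h6 := (Nat.div_add_mod (p - baseC n) (2^n)).symm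
      rw [Nat.mul_comm] at h6
      omega
  rcases Nat.lt_or_ge p (baseT n + 2 * S n) with h6 | h6
  · have hmlt : (p - baseT n) % S n < S n := Nat.mod_lt _ (by omega)
    have hmod := (Nat.div_add_mod (p - baseT n) (S n)).symm
    rw [Nat.mul_comm] at hmod
    refine Or.inr (Or.inr (Or.inr (Or.inr (Or.inr (Or.inr (Or.inl
      ⟨(p - baseT n) / S n, ?_, S n - (p - baseT n) % S n, by omega, by omega, by omega⟩))))))
    exact Nat.div_lt_of_lt_mul (by omega)
  unfold csize at hp
  omega

end S10
namespace S10
variable (n : ℕ) (g : (Fin n → Bool) → Bool)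

lemma mulbridge' {a b : ℕ} (h : a + 1 ≤ b) : a * 2^n + 2^n ≤ b * 2^n := by
  have h2 := Nat.mul_le_mul_right (2^n) h
  rw [Nat.add_mul, Nat.one_mul] at h2
  exact h2

lemma circ_wf (hn : 0 < n) {p : ℕ} (hp : p < csize n) :
    ∀ j ∈ (gateAt n g p).deps, j < p := by
  have hP := hP n
  have hS : S n = 2 * 2^n - 1 := rfl
  intro j hj
  rcases coverage n hp with h | ⟨i, hi, rfl⟩ | rfl | rfl | ⟨a, ha, rfl⟩ |
    ⟨l, hl, v, hv, rfl⟩ | ⟨k, hk, t, ht1, ht2, rfl⟩ | rfl | rfl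
  · rw [gateAt_A n g h] at hj; simp [Gate.deps] at hj
  · rw [gateAt_B n g hi] at hj
    simp only [Gate.deps, List.mem_singleton] at hj; omega
  · rw [gateAt_cf] at hj; simp [Gate.deps] at hj
  · rw [gateAt_ct] at hj; simp [Gate.deps] at hj
  · rw [gateAt_Y n g ha] at hj; simp [Gate.deps] at hj
  · rw [gateAt_C n g hl hv] at hj
    simp only [Gate.deps, List.mem_cons, List.not_mem_nil, or_false] at hj
    have hbr : l * 2^n + 2^n ≤ n * 2^n := mulbridge' n hl
    unfold baseC
    rcases hj with rfl | rfl
    · split_ifs with h1 h2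
      · omega
      · omega
      · have : (l-1) * 2^n + 2^n ≤ l * 2^n := mulbridge' n (by omega)
        unfold baseC; omega
    · split_ifs <;> omega
  · rw [gateAt_tree n g hk ht1 ht2] at hj
    have hkS : k * S n ≤ 1 * S n := Nat.mul_le_mul_right _ (by omega)
    rw [Nat.one_mul] at hkS
    have hnn : (n-1) * 2^n + 2^n ≤ n * 2^n := mulbridge' n (by omega)
    unfold baseT baseC at hj ⊢
    try unfold baseY at hj
    split_ifs at hj <;>
      simp only [Gate.deps, List.mem_cons, List.not_mem_nil, or_false] at hj <;>
      rcases hj with rfl | rfl <;> omega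
  · rw [gateAt_top0] at hj
    simp only [Gate.deps, List.mem_singleton] at hj; omega
  · rw [gateAt_top1] at hj
    simp only [Gate.deps, List.mem_cons, List.not_mem_nil, or_false] at hj
    omega

/-- the circuit computing `EADDR n g` -/
@[reducible] def circ (hn : 0 < n) : Circuit (n + 2^n) where
  size := csize n
  gates := fun i => gateAt n g i
  out := ⟨baseT n + 2 * S n + 1, by unfold csize; omega⟩
  wf := fun i => circ_wf n g hn i.isLt

lemma circ_gates (hn : 0 < n) {p : ℕ} (h : p < csize n) :
    (circ n g hn).gates ⟨p, h⟩ = gateAt n g p := rfl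

lemma Circuit.evalGate_pos_congr {m : ℕ} (C : Circuit m) (x : Fin m → Bool) {i i' : ℕ}
    (h : i < C.size) (e : i = i') (h' : i' < C.size) :
    C.evalGate x i h = C.evalGate x i' h' := by subst e; rfl

end S10
namespace S10
variable (n : ℕ) (g : (Fin n → Bool) → Bool)

/-- the `x`-part of the input, as an infinite bit string -/
def xf (z : Fin (n + 2^n) → Bool) : ℕ → Bool :=
  fun i => if h : i < n then z (Fin.castAdd (2^n) ⟨i, h⟩) else false

/-- the selected `y` bit -/
def ybit (z : Fin (n + 2^n) → Bool) : Bool :=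
  z (Fin.natAdd n ⟨prefVal n (xf n z), prefVal_lt _ n⟩)

/-- the value carried by tree `k` -/
def Vk (z : Fin (n + 2^n) → Bool) (k : ℕ) : Bool :=
  if k = 0 then (gN n g (prefVal n (xf n z)) || ybit n z)
  else (gN n g (prefVal n (xf n z)) && ybit n z)

variable (hn : 0 < n) (z : Fin (n + 2^n) → Bool)

include hn in
lemma depA {p a b : ℕ} (hp : p < csize n) (hg : gateAt n g p = .and a b) : a < p :=
  circ_wf n g hn hp a (by rw [hg]; simp [Gate.deps])

include hn in
lemma depB {p a b : ℕ} (hp : p < csize n) (hg : gateAt n g p = .and a b) : b < p :=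
  circ_wf n g hn hp b (by rw [hg]; simp [Gate.deps])

include hn in
lemma depOA {p a b : ℕ} (hp : p < csize n) (hg : gateAt n g p = .or a b) : a < p :=
  circ_wf n g hn hp a (by rw [hg]; simp [Gate.deps])

include hn in
lemma depOB {p a b : ℕ} (hp : p < csize n) (hg : gateAt n g p = .or a b) : b < p :=
  circ_wf n g hn hp b (by rw [hg]; simp [Gate.deps])

include hn in
lemma depN {p a : ℕ} (hp : p < csize n) (hg : gateAt n g p = .not a) : a < p :=
  circ_wf n g hn hp a (by rw [hg]; simp [Gate.deps])

lemma L_A {p : ℕ} (hp : p < n) (h : p < csize n) :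
    (circ n g hn).evalGate z p h = xf n z p := by
  rw [Circuit.evalGate_input _ _ (gateAt_A n g hp), xf, dif_pos hp]

lemma L_B {i : ℕ} (hi : i < n) (h : n + i < csize n) :
    (circ n g hn).evalGate z (n + i) h = ! xf n z i := by
  have hg := gateAt_B n g (i := i) hi
  rw [Circuit.evalGate_not _ _ hg (depN n g hn h hg), L_A n g hn z hi]

lemma L_cf (h : 2*n < csize n) : (circ n g hn).evalGate z (2*n) h = false :=
  Circuit.evalGate_const _ _ (gateAt_cf n g)

lemma L_ct (h : 2*n+1 < csize n) : (circ n g hn).evalGate z (2*n+1) h = true :=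
  Circuit.evalGate_const _ _ (gateAt_ct n g)

lemma L_Y {a : ℕ} (ha : a < 2^n) (h : baseY n + a < csize n) :
    (circ n g hn).evalGate z (baseY n + a) h = z (Fin.natAdd n ⟨a, ha⟩) :=
  Circuit.evalGate_input _ _ (gateAt_Y n g ha)

lemma L_C : ∀ l, l < n → ∀ v, v < 2^n → ∀ (h : baseC n + (l * 2^n + v) < csize n),
    (circ n g hn).evalGate z (baseC n + (l * 2^n + v)) h
      = decide (prefVal (l+1) (xf n z) = v) := by
  intro l
  induction l with
  | zero =>
    intro hl v hv h
    have hp1 : prefVal (0+1) (xf n z) < 2 := by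
      have := prefVal_lt (xf n z) 1; norm_num at this; exact Nat.lt_succ_of_le this
    have hg := gateAt_C n g hl hv
    rw [if_pos rfl] at hg
    by_cases hv2 : v < 2 <;> by_cases hvm : v % 2 = 1 <;>
      simp only [hv2, hvm, if_true, if_false, ite_true, ite_false, reduceIte] at hg <;>
      rw [Circuit.evalGate_and _ _ hg (depA n g hn h hg) (depB n g hn h hg)]
    · rw [L_ct n g hn z, L_A n g hn z hl]
      have hv1 : v = 1 := by omega
      subst hv1
      cases hx : xf n z 0 <;> simp [hx, prefVal]
    · rw [L_ct n g hn z, L_B n g hn z hl]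
      have hv0 : v = 0 := by omega
      subst hv0
      cases hx : xf n z 0 <;> simp [hx, prefVal]
    · rw [L_cf n g hn z, L_A n g hn z hl]
      simp only [Bool.false_and]
      symm; rw [decide_eq_false_iff_not]
      omega
    · rw [L_cf n g hn z, L_B n g hn z hl]
      simp only [Bool.false_and]
      symm; rw [decide_eq_false_iff_not]
      omega
  | succ l ih =>
    intro hl v hv h
    have hb2 : l * 2^n + 2^n ≤ (l+1) * 2^n := mulbridge' n (Nat.le_refl _)
    have hpos : baseC n + (l * 2^n + v / 2) < csize n := by omega
    have hg := gateAt_C n g hl hv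
    rw [if_neg (Nat.succ_ne_zero l)] at hg
    simp only [Nat.add_sub_cancel] at hg
    by_cases hvm : v % 2 = 1 <;>
      simp only [hvm, if_true, if_false, ite_true, ite_false, reduceIte] at hg <;>
      rw [Circuit.evalGate_and _ _ hg (depA n g hn h hg) (depB n g hn h hg)] <;>
      rw [ih (by omega) (v/2) (by omega) hpos]
    · rw [L_A n g hn z hl]
      conv_rhs => rw [prefVal]
      cases hx : xf n z (l+1)
      · simp only [Bool.and_false, Bool.false_eq_true, if_false, reduceIte]
        symm; rw [decide_eq_false_iff_not]; omega
      · simp only [Bool.and_true, if_true, reduceIte]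
        exact decide_eq_decide.mpr (by omega)
    · rw [L_B n g hn z hl]
      conv_rhs => rw [prefVal]
      cases hx : xf n z (l+1)
      · simp only [Bool.not_false, Bool.and_true, Bool.false_eq_true, if_false, reduceIte]
        exact decide_eq_decide.mpr (by omega)
      · simp only [Bool.not_true, Bool.and_false, if_true, reduceIte]
        symm; rw [decide_eq_false_iff_not]; omega

end S10
namespace S10
variable (n : ℕ) (g : (Fin n → Bool) → Bool) (hn : 0 < n) (z : Fin (n + 2^n) → Bool)

lemma L_treeAux : ∀ j, j ≤ n → ∀ u, u < 2^(n-j) → ∀ k, k < 2 →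
    ∀ (h : baseT n + k * S n + (S n - (2^(n-j) + u)) < csize n),
    (circ n g hn).evalGate z (baseT n + k * S n + (S n - (2^(n-j) + u))) h
      = (decide (prefVal (n-j) (xf n z) = u) && Vk n g z k) := by
  have hP := hP n
  have hS : S n = 2 * 2^n - 1 := rfl
  intro j
  induction j with
  | zero =>
    intro _ u hu k hk h
    simp only [Nat.sub_zero] at hu h ⊢
    have ht1 : 1 ≤ 2^n + u := by omega
    have ht2 : 2^n + u ≤ S n := by omega
    have hg := gateAt_tree n g hk ht1 ht2
    rw [if_pos (by omega)] at hg
    simp only [Nat.add_sub_cancel_left] at hg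
    have hnn : n - 1 + 1 = n := by omega
    interval_cases k <;>
      simp only [if_true, if_false, ite_true, ite_false, reduceIte, Nat.one_ne_zero] at hg
    -- k = 0
    · by_cases hgn : gN n g u = true <;>
        simp only [hgn, Bool.false_eq_true, Bool.true_eq_false, if_true, if_false,
          ite_true, ite_false, reduceIte] at hg
      · rw [Circuit.evalGate_and _ _ hg (depA n g hn h hg) (depB n g hn h hg),
          L_C n g hn z (n-1) (by omega) u hu, L_ct n g hn z, hnn]
        by_cases hbv : prefVal n (xf n z) = u
        · subst hbv; simp [Vk, hgn]
        · simp [hbv]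
      · rw [Circuit.evalGate_and _ _ hg (depA n g hn h hg) (depB n g hn h hg),
          L_C n g hn z (n-1) (by omega) u hu, L_Y n g hn z hu, hnn]
        by_cases hbv : prefVal n (xf n z) = u
        · subst hbv; simp [Vk, hgn, ybit]
        · simp [hbv]
    -- k = 1
    · by_cases hgn : gN n g u = true <;>
        simp only [hgn, Bool.false_eq_true, Bool.true_eq_false, if_true, if_false,
          ite_true, ite_false, reduceIte] at hg
      · rw [Circuit.evalGate_and _ _ hg (depA n g hn h hg) (depB n g hn h hg),
          L_C n g hn z (n-1) (by omega) u hu, L_Y n g hn z hu, hnn]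
        by_cases hbv : prefVal n (xf n z) = u
        · subst hbv; simp [Vk, hgn, ybit]
        · simp [hbv]
      · rw [Circuit.evalGate_and _ _ hg (depA n g hn h hg) (depB n g hn h hg),
          L_C n g hn z (n-1) (by omega) u hu, L_cf n g hn z, hnn]
        by_cases hbv : prefVal n (xf n z) = u
        · subst hbv; simp [Vk, hgn]
        · simp [hbv]
  | succ j ih =>
    intro hj u hu k hk h
    have hd : n - j = (n - (j+1)) + 1 := by omega
    have h2d : 2^(n-(j+1)) * 2 ≤ 2^n := by
      have := Nat.pow_le_pow_right (show 1 ≤ 2 by norm_num) (show (n-(j+1))+1 ≤ n by omega)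
      rwa [pow_succ] at this
    have hkS : k * S n ≤ 1 * S n := Nat.mul_le_mul_right _ (by omega)
    rw [Nat.one_mul] at hkS
    have hcs : csize n = baseT n + 2 * S n + 2 := rfl
    have ht1 : 1 ≤ 2^(n-(j+1)) + u := by omega
    have ht2 : 2^(n-(j+1)) + u ≤ S n := by omega
    have hg := gateAt_tree n g hk ht1 ht2
    rw [if_neg (by omega)] at hg
    have e1 : baseT n + k * S n + (S n - 2 * (2^(n-(j+1)) + u))
        = baseT n + k * S n + (S n - (2^(n-j) + (2*u))) := by
      rw [hd, pow_succ]; omega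
    have e2 : baseT n + k * S n + (S n - (2 * (2^(n-(j+1)) + u) + 1))
        = baseT n + k * S n + (S n - (2^(n-j) + (2*u+1))) := by
      rw [hd, pow_succ]; omega
    have hu1 : 2*u < 2^(n-j) := by rw [hd, pow_succ]; omega
    have hu2 : 2*u+1 < 2^(n-j) := by rw [hd, pow_succ]; omega
    have hp1 : baseT n + k * S n + (S n - (2^(n-j) + (2*u))) < csize n := by omega
    have hp2 : baseT n + k * S n + (S n - (2^(n-j) + (2*u+1))) < csize n := by omega
    rw [Circuit.evalGate_or _ _ hg (depOA n g hn h hg) (depOB n g hn h hg),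
      Circuit.evalGate_pos_congr _ z _ e1 hp1, Circuit.evalGate_pos_congr _ z _ e2 hp2,
      ih (by omega) (2*u) hu1 k hk hp1, ih (by omega) (2*u+1) hu2 k hk hp2]
    rw [hd]
    simp only [prefVal]
    cases hV : Vk n g z k
    · simp
    · simp only [Bool.and_true]
      set b := (if xf n z (n - (j+1)) = true then (1:ℕ) else 0) with hbdef
      have hb : b ≤ 1 := by rw [hbdef]; split <;> omega
      show (decide ((2 * prefVal (n-(j+1)) (xf n z) + b) = 2*u)
        || decide ((2 * prefVal (n-(j+1)) (xf n z) + b) = 2*u+1))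
        = decide (prefVal (n-(j+1)) (xf n z) = u)
      rw [← Bool.decide_or]
      exact decide_eq_decide.mpr (by omega)

lemma L_tree : ∀ d, d ≤ n → ∀ u, u < 2^d → ∀ k, k < 2 →
    ∀ (h : baseT n + k * S n + (S n - (2^d + u)) < csize n),
    (circ n g hn).evalGate z (baseT n + k * S n + (S n - (2^d + u))) h
      = (decide (prefVal d (xf n z) = u) && Vk n g z k) := by
  intro d hd
  have := L_treeAux n g hn z (n - d) (by omega)
  rw [show n - (n - d) = d by omega] at this
  exact this

lemma L_top0 : ∀ (h : baseT n + 2 * S n < csize n),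
    (circ n g hn).evalGate z (baseT n + 2 * S n) h = ! Vk n g z 0 := by
  have hP := hP n
  have hS : S n = 2 * 2^n - 1 := rfl
  have hcs : csize n = baseT n + 2 * S n + 2 := rfl
  have h20 : (2:ℕ)^0 = 1 := pow_zero 2
  intro h
  have hg := gateAt_top0 n g
  have e1 : baseT n + S n - 1 = baseT n + 0 * S n + (S n - (2^0 + 0)) := by omega
  have hp1 : baseT n + 0 * S n + (S n - (2^0 + 0)) < csize n := by omega
  rw [Circuit.evalGate_not _ _ hg (depN n g hn h hg),
    Circuit.evalGate_pos_congr _ z _ e1 hp1,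
    L_tree n g hn z 0 (by omega) 0 (by omega) 0 (by omega) hp1]
  simp [prefVal]

lemma L_out : ∀ (h : baseT n + 2 * S n + 1 < csize n),
    (circ n g hn).evalGate z (baseT n + 2 * S n + 1) h
      = (Vk n g z 1 || ! Vk n g z 0) := by
  have hP := hP n
  have hS : S n = 2 * 2^n - 1 := rfl
  have hcs : csize n = baseT n + 2 * S n + 2 := rfl
  have h20 : (2:ℕ)^0 = 1 := pow_zero 2
  intro h
  have hg := gateAt_top1 n g
  have e1 : baseT n + 2 * S n - 1 = baseT n + 1 * S n + (S n - (2^0 + 0)) := by omega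
  have hp1 : baseT n + 1 * S n + (S n - (2^0 + 0)) < csize n := by omega
  have hp2 : baseT n + 2 * S n < csize n := by omega
  rw [Circuit.evalGate_or _ _ hg (depOA n g hn h hg) (depOB n g hn h hg),
    Circuit.evalGate_pos_congr _ z _ e1 hp1,
    L_tree n g hn z 0 (by omega) 0 (by omega) 1 (by omega) hp1,
    Circuit.evalGate_pos_congr _ z _ rfl hp2, L_top0 n g hn z hp2]
  simp [prefVal]

lemma f1 : gN n g (prefVal n (xf n z)) = g (fun i => z (Fin.castAdd (2^n) i)) := by
  unfold gN
  congr 1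
  funext i
  rw [prefVal_testBit, if_pos (by omega)]
  have e : n - 1 - (n - 1 - (i:ℕ)) = (i:ℕ) := by omega
  rw [e, xf, dif_pos i.isLt]

lemma f2 : binVal (fun i => z (Fin.castAdd (2^n) i)) = prefVal n (xf n z) := by
  rw [binVal, prefVal_sum,
    ← Fin.sum_univ_eq_sum_range (fun i => if xf n z i then 2^(n - 1 - i) else 0) n]
  apply Finset.sum_congr rfl
  intro i _
  congr 1
  rw [xf, dif_pos i.isLt, Fin.eta]

lemma circ_computes : (circ n g hn).Computes (EADDR n g) := by
  intro z
  have hcs : csize n = baseT n + 2 * S n + 2 := rfl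
  have hout : (((circ n g hn).out : Fin (csize n)) : ℕ) = baseT n + 2 * S n + 1 := rfl
  have hb : baseT n + 2 * S n + 1 < csize n := by omega
  unfold Circuit.output
  rw [Circuit.evalGate_pos_congr _ z _ hout hb, L_out n g hn z hb]
  have hE : EADDR n g z
      = if gN n g (prefVal n (xf n z)) = true then ybit n z else ! ybit n z := by
    simp only [EADDR]
    rw [f1 n g z]
    congr 1
    · unfold ybit
      congr 1
      apply Fin.ext
      show n + (binVal (fun i => z (Fin.castAdd (2^n) i)) % 2^n) = n + prefVal n (xf n z)
      rw [f2 n z, Nat.mod_eq_of_lt (prefVal_lt _ n)]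
    · unfold ybit
      congr 2
      apply Fin.ext
      show n + (binVal (fun i => z (Fin.castAdd (2^n) i)) % 2^n) = n + prefVal n (xf n z)
      rw [f2 n z, Nat.mod_eq_of_lt (prefVal_lt _ n)]
  rw [hE]
  cases hG : gN n g (prefVal n (xf n z)) <;> cases hY : ybit n z <;>
    simp [Vk, hG, hY]

end S10
namespace S10
variable (n : ℕ) (g : (Fin n → Bool) → Bool) (hn : 0 < n) (z : Fin (n + 2^n) → Bool)

/-- the (superset of the) activated positions under input `z` -/
def pathList : List ℕ :=
  ((List.range n).map (fun i => n + i))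
  ++ ((List.range n).map (fun l => baseC n + (l * 2^n + prefVal (l+1) (xf n z))))
  ++ ((List.range (n+1)).map (fun d => baseT n + 0 * S n + (S n - (2^d + prefVal d (xf n z)))))
  ++ ((List.range (n+1)).map (fun d => baseT n + 1 * S n + (S n - (2^d + prefVal d (xf n z)))))
  ++ [baseT n + 2 * S n, baseT n + 2 * S n + 1]

lemma mem_pathList (i : Fin ((circ n g hn).size))
    (h1 : ((circ n g hn).gates i).isInner = true)
    (h2 : (circ n g hn).evalGate z i i.isLt = true) :
    (i : ℕ) ∈ pathList n z := by
  have hP := hP n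
  have hS : S n = 2 * 2^n - 1 := rfl
  have hlt : (i : ℕ) < csize n := i.isLt
  simp only [pathList, List.mem_append, List.mem_map, List.mem_range, List.mem_cons,
    List.mem_singleton, List.not_mem_nil, or_false]
  rcases coverage n hlt with h | ⟨i', hi', hpeq⟩ | hpeq | hpeq | ⟨a, ha, hpeq⟩ |
    ⟨l, hl, v, hv, hpeq⟩ | ⟨k, hk, t, ht1, ht2, hpeq⟩ | hpeq | hpeq
  · have := gateAt_A n g (i := (i:ℕ)) h
    rw [show (circ n g hn).gates i = gateAt n g (i:ℕ) from rfl, this] at h1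
    simp [Gate.isInner] at h1
  · exact Or.inl (Or.inl (Or.inl (Or.inl ⟨i', hi', hpeq.symm⟩)))
  · have := gateAt_cf n g
    rw [show (circ n g hn).gates i = gateAt n g (i:ℕ) from rfl, hpeq, this] at h1
    simp [Gate.isInner] at h1
  · have := gateAt_ct n g
    rw [show (circ n g hn).gates i = gateAt n g (i:ℕ) from rfl, hpeq, this] at h1
    simp [Gate.isInner] at h1
  · have := gateAt_Y n g ha
    rw [show (circ n g hn).gates i = gateAt n g (i:ℕ) from rfl, hpeq, this] at h1
    simp [Gate.isInner] at h1
  · have hlt' : baseC n + (l * 2^n + v) < csize n := hpeq ▸ hlt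
    rw [Circuit.evalGate_pos_congr _ z _ hpeq hlt',
      L_C n g hn z l hl v hv hlt'] at h2
    simp only [decide_eq_true_eq] at h2
    exact Or.inl (Or.inl (Or.inl (Or.inr ⟨l, hl, by rw [h2]; exact hpeq.symm⟩)))
  · obtain ⟨d, u, hu, rfl⟩ := exists_depth t ht1
    have hdn : d ≤ n := by
      by_contra hc
      have := Nat.pow_le_pow_right (show 1 ≤ 2 by norm_num) (show n+1 ≤ d by omega)
      rw [pow_succ] at this
      omega
    have hlt' : baseT n + k * S n + (S n - (2^d + u)) < csize n := hpeq ▸ hlt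
    rw [Circuit.evalGate_pos_congr _ z _ hpeq hlt',
      L_tree n g hn z d hdn u hu k hk hlt'] at h2
    rw [Bool.and_eq_true, decide_eq_true_eq] at h2
    interval_cases k
    · exact Or.inl (Or.inl (Or.inr ⟨d, by omega, by rw [h2.1]; exact hpeq.symm⟩))
    · exact Or.inl (Or.inr ⟨d, by omega, by rw [h2.1]; exact hpeq.symm⟩)
  · exact Or.inr (Or.inl hpeq)
  · exact Or.inr (Or.inr hpeq)

lemma energyAt_le : (circ n g hn).energyAt z ≤ 4*n + 4 := by
  unfold Circuit.energyAt
  have step1 : (Finset.univ.filter fun i : Fin ((circ n g hn).size) =>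
      ((circ n g hn).gates i).isInner = true
        ∧ (circ n g hn).evalGate z i i.isLt = true).card
      ≤ (pathList n z).toFinset.card := by
    refine Finset.card_le_card_of_injOn (fun i => (i : ℕ)) ?_ Fin.val_injective.injOn
    intro i hi
    rw [Finset.mem_coe, Finset.mem_filter] at hi
    rw [Finset.mem_coe, List.mem_toFinset]
    exact mem_pathList n g hn z i hi.2.1 hi.2.2
  refine step1.trans (((pathList n z).toFinset_card_le).trans ?_)
  simp only [pathList, List.length_append, List.length_map, List.length_range,
    List.length_cons, List.length_nil]
  omega

lemma energy_le : (circ n g hn).energy ≤ 4*n + 4 :=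
  Finset.sup_le fun z _ => energyAt_le n g hn z

end S10

/-- For every positive integer `n` and every Boolean function
`g : {0,1}^n → {0,1}`, `EC(EADDR_{n,g}) ≤ 6n + 2`. -/
theorem stmt10 (n : ℕ) (hn : 0 < n) (g : (Fin n → Bool) → Bool) :
    EC (EADDR n g) ≤ 6 * n + 2 := by
  have h1 : (S10.circ n g hn).energy ∈
      {k | ∃ C : Circuit (n + 2^n), C.Computes (EADDR n g) ∧ C.energy = k} :=
    ⟨S10.circ n g hn, S10.circ_computes n g hn, rfl⟩
  have h2 := Nat.sInf_le h1
  have h3 := S10.energy_le n g hn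
  unfold EC
  omega
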